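/- There exist β0 > 0 and, for each 0 < β < β0, a natural number n0 such that the following holds for all n ≥ n0: let A and B be disjoint sets of sizes 3n and 2n respectively, and let J be a 5-uniform hypergraph on the 5n vertices V = A ∪ B in which every edge contains exactly 3 vertices of A and exactly 2 vertices of B. If J has at least (1 − β)·C(3n,3)·C(2n,2) edges and every vertex of J is contained in at least n⁴/10⁸ edges of J, then J admits a perfect matching. -/

import Mathlib

open Finset

variable {V : Type*} [DecidableEq V]




lemma union_inter_eq {A' B' S P : Finset V} (hS : S ⊆ A') (hP : P ⊆ B')
    (hd : Disjoint A' B') : (S ∪ P) ∩ A' = S := by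
  have hPA : P ∩ A' = ∅ := Finset.disjoint_iff_inter_eq_empty.mp (hd.symm.mono_left hP)
  rw [union_inter_distrib_right, inter_eq_left.mpr hS, hPA, union_empty]

lemma card_unionImage (A' B' : Finset V) (hd : Disjoint A' B') (a b : ℕ) :
    (((A'.powersetCard a) ×ˢ (B'.powersetCard b)).image fun p => p.1 ∪ p.2).card
      = A'.card.choose a * B'.card.choose b := by
  rw [Finset.card_image_of_injOn, card_product, card_powersetCard, card_powersetCard]
  intro p hp q hq hpq
  simp only [mem_coe, mem_product, mem_powersetCard] at hp hq
  have h1 : p.1 = q.1 := by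
    have e1 := union_inter_eq hp.1.1 hp.2.1 hd
    have e2 := union_inter_eq hq.1.1 hq.2.1 hd
    simp only at hpq
    rw [← e1, ← e2, hpq]
  have h2 : p.2 = q.2 := by
    have e1 := union_inter_eq hp.2.1 hp.1.1 hd.symm
    have e2 := union_inter_eq hq.2.1 hq.1.1 hd.symm
    simp only at hpq
    rw [← e1, ← e2, union_comm p.2, union_comm q.2, hpq]
  exact Prod.ext h1 h2

lemma mem_unionImage {A' B' : Finset V} {a b : ℕ} (e : Finset V)
    (he : e ⊆ A' ∪ B') (ha : (e ∩ A').card = a) (hb : (e ∩ B').card = b) :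
    e ∈ ((A'.powersetCard a) ×ˢ (B'.powersetCard b)).image fun p => p.1 ∪ p.2 := by
  refine mem_image.mpr ⟨(e ∩ A', e ∩ B'), ?_, ?_⟩
  · simp only [mem_product, mem_powersetCard]
    exact ⟨⟨inter_subset_right, ha⟩, inter_subset_right, hb⟩
  · simp only
    rw [← inter_union_distrib_left, inter_eq_left.mpr he]

lemma sum_deg [Fintype V] (N : Finset (Finset V)) :
    ∑ v : V, (N.filter fun g => v ∈ g).card = ∑ g ∈ N, g.card := by
  simp only [card_filter]
  rw [Finset.sum_comm]
  congr 1
  ext g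
  simp [card_filter]

lemma k5_le_choose (k : ℕ) (hk : 1 ≤ k) : k ^ 5 ≤ (3 * k).choose 3 * (2 * k).choose 2 := by
  have d3 : (3 * k).descFactorial 3 = (3 * k - 2) * ((3 * k - 1) * (3 * k)) := by
    simp [Nat.descFactorial_succ, Nat.descFactorial_zero]
  have d2 : (2 * k).descFactorial 2 = (2 * k - 1) * (2 * k) := by
    simp [Nat.descFactorial_succ, Nat.descFactorial_zero]
  have e3 : (3 * k).descFactorial 3 = 6 * (3 * k).choose 3 :=
    Nat.descFactorial_eq_factorial_mul_choose _ _
  have e2 : (2 * k).descFactorial 2 = 2 * (2 * k).choose 2 :=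
    Nat.descFactorial_eq_factorial_mul_choose _ _
  have h3 : k ^ 3 ≤ (3 * k).choose 3 := by
    have h1 : 6 * k ^ 3 ≤ (3 * k - 2) * ((3 * k - 1) * (3 * k)) := by
      have a1 : 2 * k ≤ 3 * k - 1 := by omega
      have a2 : k ≤ 3 * k - 2 := by omega
      calc 6 * k ^ 3 = k * (2 * k * (3 * k)) := by ring
        _ ≤ (3 * k - 2) * ((3 * k - 1) * (3 * k)) :=
          Nat.mul_le_mul a2 (Nat.mul_le_mul_right _ a1)
    omega
  have h2 : k ^ 2 ≤ (2 * k).choose 2 := by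
    have h1 : 2 * k ^ 2 ≤ (2 * k - 1) * (2 * k) := by
      have a1 : k ≤ 2 * k - 1 := by omega
      calc 2 * k ^ 2 = k * (2 * k) := by ring
        _ ≤ (2 * k - 1) * (2 * k) := Nat.mul_le_mul_right _ a1
    omega
  calc k ^ 5 = k ^ 3 * k ^ 2 := by ring
    _ ≤ _ := Nat.mul_le_mul h3 h2


lemma greedy_cover (J : Finset (Finset V)) (hJ5 : ∀ e ∈ J, e.card = 5)
    (Bd : Finset V)
    (hstep : ∀ v ∈ Bd, ∀ U : Finset V, U.card ≤ 5 * Bd.card → v ∉ U →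
      ∃ e ∈ J, v ∈ e ∧ Disjoint e U) :
    ∃ M₀ ⊆ J, (M₀ : Set (Finset V)).PairwiseDisjoint id ∧ Bd ⊆ M₀.biUnion id ∧
      M₀.card ≤ Bd.card := by
  suffices h : ∀ c : ℕ, ∀ C ⊆ Bd, C.card = c → ∃ M₀ ⊆ J,
      (M₀ : Set (Finset V)).PairwiseDisjoint id ∧ C ⊆ M₀.biUnion id ∧
      M₀.card ≤ C.card from h Bd.card Bd subset_rfl rfl
  intro c
  induction c using Nat.strong_induction_on with
  | _ c ih =>
    intro C hCB hCc
    rcases Nat.eq_zero_or_pos c with hc0 | hcpos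
    · refine ⟨∅, empty_subset _, ?_, ?_, by simp⟩
      · simp [Set.PairwiseDisjoint]
      · have : C = ∅ := card_eq_zero.mp (hCc.trans hc0)
        simp [this]
    · have hCne : C.Nonempty := card_pos.mp (hCc ▸ hcpos)
      obtain ⟨v, hv⟩ := hCne
      have hec : (C.erase v).card = c - 1 := by rw [card_erase_of_mem hv, hCc]
      obtain ⟨M₁, hM₁J, hM₁pd, hM₁cov, hM₁card⟩ :=
        ih (c - 1) (by omega) (C.erase v) ((erase_subset _ _).trans hCB)
          (by rw [card_erase_of_mem hv, hCc])
      by_cases hvc : v ∈ M₁.biUnion id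
      · refine ⟨M₁, hM₁J, hM₁pd, ?_, by omega⟩
        intro x hx
        rcases eq_or_ne x v with rfl | hxv
        · exact hvc
        · exact hM₁cov (mem_erase.mpr ⟨hxv, hx⟩)
      · have hU : (M₁.biUnion id).card ≤ 5 * Bd.card := by
          calc (M₁.biUnion id).card ≤ ∑ e ∈ M₁, (id e).card := card_biUnion_le
            _ ≤ ∑ _e ∈ M₁, 5 := by
              refine sum_le_sum fun e he => ?_
              exact le_of_eq (hJ5 e (hM₁J he))
            _ = 5 * M₁.card := by rw [sum_const, smul_eq_mul, mul_comm]
            _ ≤ 5 * Bd.card := by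
              have : M₁.card ≤ Bd.card := le_trans hM₁card
                (le_trans (by omega) (hCc ▸ card_le_card hCB))
              omega
        obtain ⟨e, heJ, hve, hedisj⟩ := hstep v (hCB hv) _ hU hvc
        have heM₁ : e ∉ M₁ := by
          intro hmem
          exact hvc (mem_biUnion.mpr ⟨e, hmem, hve⟩)
        refine ⟨insert e M₁, ?_, ?_, ?_, ?_⟩
        · exact insert_subset heJ hM₁J
        · rw [coe_insert]
          refine hM₁pd.insert fun f hf hne => ?_
          exact hedisj.mono_right (subset_biUnion_of_mem id (mem_coe.mp hf))
        · intro x hx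
          rcases eq_or_ne x v with rfl | hxv
          · exact mem_biUnion.mpr ⟨e, mem_insert_self _ _, hve⟩
          · have := hM₁cov (mem_erase.mpr ⟨hxv, hx⟩)
            rw [biUnion_insert]
            exact mem_union_right _ this
        · rw [card_insert_of_notMem heM₁]
          omega



lemma augment [LinearOrder V] (A B : Finset V) (hAB : Disjoint A B)
    (J M : Finset (Finset V)) (hMJ : M ⊆ J)
    (hJe : ∀ e ∈ J, (e ∩ A).card = 3 ∧ (e ∩ B).card = 2)
    (hMpd : (M : Set (Finset V)).PairwiseDisjoint id)
    (S1 S2 S3 S4 : Finset (Finset V))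
    (hS1 : S1 ⊆ M) (hS2 : S2 ⊆ M) (hS3 : S3 ⊆ M) (hS4 : S4 ⊆ M)
    (hd12 : Disjoint S1 S2) (hd13 : Disjoint S1 S3) (hd14 : Disjoint S1 S4)
    (hd23 : Disjoint S2 S3) (hd24 : Disjoint S2 S4) (hd34 : Disjoint S3 S4)
    (u₁ u₂ u₃ v₁ v₂ : V)
    (hu₁A : u₁ ∈ A) (hu₂A : u₂ ∈ A) (hu₃A : u₃ ∈ A) (hv₁B : v₁ ∈ B) (hv₂B : v₂ ∈ B)
    (hu12 : u₁ ≠ u₂) (hu13 : u₁ ≠ u₃) (hu23 : u₂ ≠ u₃) (hv12 : v₁ ≠ v₂)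
    (hout : ∀ x ∈ ({u₁, u₂, u₃, v₁, v₂} : Finset V), x ∉ M.biUnion id)
    (N : Finset (Finset V))
    (hNJ : ∀ g : Finset V, (g ∩ A).card = 3 → (g ∩ B).card = 2 → g ∉ J → g ∈ N)
    (q : ℕ)
    (hq1 : S1.card = q) (hq2 : S2.card = q) (hq3 : S3.card = q) (hq4 : S4.card = q)
    (hcount : 625 * ((N.filter fun g => u₁ ∈ g).card + (N.filter fun g => u₂ ∈ g).card
      + (N.filter fun g => u₃ ∈ g).card + (N.filter fun g => v₁ ∈ g).card
      + (N.filter fun g => v₂ ∈ g).card) < q ^ 4) :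
    ∃ Q ⊆ J, (Q : Set (Finset V)).PairwiseDisjoint id ∧
      M \ (S1 ∪ S2 ∪ S3 ∪ S4) ⊆ Q ∧ Q.card = M.card + 1 := by
  classical
  have hMcards : ∀ h ∈ M, (h ∩ A).card = 3 ∧ (h ∩ B).card = 2 := fun h hh => hJe h (hMJ hh)
  have hMuniq : ∀ h ∈ M, ∀ h' ∈ M, ∀ x : V, x ∈ h → x ∈ h' → h = h' := by
    intro h hh h' hh' x hx hx'
    by_contra hne
    exact Finset.disjoint_left.mp (hMpd (mem_coe.mpr hh) (mem_coe.mpr hh') hne) hx hx'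
  have hclassAB : ∀ {x y : V}, x ∈ A → y ∈ B → x ≠ y :=
    fun hx hy e => Finset.disjoint_left.mp hAB hx (e ▸ hy)
  -- vertex selectors
  set aF : Finset V → Fin 3 → V := fun h i =>
    if hc : (h ∩ A).card = 3 then (h ∩ A).orderEmbOfFin hc i else u₁ with haF
  set bF : Finset V → Fin 2 → V := fun h i =>
    if hc : (h ∩ B).card = 2 then (h ∩ B).orderEmbOfFin hc i else u₁ with hbF
  have aF_mem : ∀ h ∈ M, ∀ i, aF h i ∈ h ∩ A := by
    intro h hh i
    rw [haF]; simp only [(hMcards h hh).1, dif_pos]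
    exact orderEmbOfFin_mem _ _ _
  have bF_mem : ∀ h ∈ M, ∀ i, bF h i ∈ h ∩ B := by
    intro h hh i
    rw [hbF]; simp only [(hMcards h hh).2, dif_pos]
    exact orderEmbOfFin_mem _ _ _
  have aF_inj : ∀ h ∈ M, ∀ i j, aF h i = aF h j → i = j := by
    intro h hh i j hij
    rw [haF] at hij; simp only [(hMcards h hh).1, dif_pos] at hij
    exact ((h ∩ A).orderEmbOfFin (hMcards h hh).1).injective hij
  have bF_inj : ∀ h ∈ M, ∀ i j, bF h i = bF h j → i = j := by
    intro h hh i j hij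
    rw [hbF] at hij; simp only [(hMcards h hh).2, dif_pos] at hij
    exact ((h ∩ B).orderEmbOfFin (hMcards h hh).2).injective hij
  -- per-edge enumeration of the 5 vertices: slots 0,1,2 in A, slots 3,4 in B
  set gv : Finset V → Fin 5 → V := fun h p =>
    if hp : (p : ℕ) < 3 then aF h ⟨p, hp⟩ else bF h ⟨(p : ℕ) - 3, by omega⟩ with hgv
  have gv_memA : ∀ h ∈ M, ∀ p : Fin 5, (p : ℕ) < 3 → gv h p ∈ h ∩ A := by
    intro h hh p hp
    rw [hgv]; simp only [hp, dif_pos]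
    exact aF_mem h hh _
  have gv_memB : ∀ h ∈ M, ∀ p : Fin 5, ¬ ((p : ℕ) < 3) → gv h p ∈ h ∩ B := by
    intro h hh p hp
    rw [hgv]; simp only [hp, dif_neg, not_false_iff]
    exact bF_mem h hh _
  have gv_mem : ∀ h ∈ M, ∀ p : Fin 5, gv h p ∈ h := by
    intro h hh p
    by_cases hp : (p : ℕ) < 3
    · exact mem_of_mem_inter_left (gv_memA h hh p hp)
    · exact mem_of_mem_inter_left (gv_memB h hh p hp)
  have gv_inj : ∀ h ∈ M, ∀ p p' : Fin 5, gv h p = gv h p' → p = p' := by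
    intro h hh p p' hpp
    rw [hgv] at hpp
    by_cases hp : (p : ℕ) < 3 <;> by_cases hp' : (p' : ℕ) < 3
    · simp only [hp, hp', dif_pos] at hpp
      have := aF_inj h hh _ _ hpp
      have := Fin.mk.injEq (p:ℕ) hp (p':ℕ) hp' ▸ this
      exact Fin.ext (by simpa using this)
    · simp only [hp, hp', dif_pos, dif_neg, not_false_iff] at hpp
      exact absurd hpp (hclassAB (mem_of_mem_inter_right (aF_mem h hh _))
        (mem_of_mem_inter_right (bF_mem h hh _)))
    · simp only [hp, hp', dif_pos, dif_neg, not_false_iff] at hpp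
      exact absurd hpp.symm (hclassAB (mem_of_mem_inter_right (aF_mem h hh _))
        (mem_of_mem_inter_right (bF_mem h hh _)))
    · simp only [hp, hp', dif_neg, not_false_iff] at hpp
      have := bF_inj h hh _ _ hpp
      have h2 : (p : ℕ) - 3 = (p' : ℕ) - 3 := by simpa using this
      have h5 := p.isLt; have h5' := p'.isLt
      exact Fin.ext (by omega)
  -- roots
  set r : Fin 5 → V := ![u₁, u₂, u₃, v₁, v₂] with hr
  have r_mem5 : ∀ p, r p ∈ ({u₁, u₂, u₃, v₁, v₂} : Finset V) := by
    intro p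
    fin_cases p
    · exact mem_insert_self _ _
    · exact mem_insert_of_mem (mem_insert_self _ _)
    · exact mem_insert_of_mem (mem_insert_of_mem (mem_insert_self _ _))
    · exact mem_insert_of_mem (mem_insert_of_mem (mem_insert_of_mem (mem_insert_self _ _)))
    · exact mem_insert_of_mem (mem_insert_of_mem (mem_insert_of_mem (mem_insert_of_mem
        (mem_singleton_self _))))
  have r_out : ∀ p, r p ∉ M.biUnion id := fun p => hout _ (r_mem5 p)
  have r_A : ∀ p : Fin 5, (p : ℕ) < 3 → r p ∈ A := by
    intro p hp
    fin_cases p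
    · exact hu₁A
    · exact hu₂A
    · exact hu₃A
    · simp at hp
    · simp at hp
  have r_B : ∀ p : Fin 5, ¬ ((p : ℕ) < 3) → r p ∈ B := by
    intro p hp
    fin_cases p
    · simp at hp
    · simp at hp
    · simp at hp
    · exact hv₁B
    · exact hv₂B
  have r_inj : ∀ p p' : Fin 5, r p = r p' → p = p' := by
    intro p p' hpp
    fin_cases p <;> fin_cases p'
    · rfl
    · exact absurd hpp hu12
    · exact absurd hpp hu13
    · exact absurd hpp (hclassAB hu₁A hv₁B)
    · exact absurd hpp (hclassAB hu₁A hv₂B)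
    · exact absurd hpp hu12.symm
    · rfl
    · exact absurd hpp hu23
    · exact absurd hpp (hclassAB hu₂A hv₁B)
    · exact absurd hpp (hclassAB hu₂A hv₂B)
    · exact absurd hpp hu13.symm
    · exact absurd hpp hu23.symm
    · rfl
    · exact absurd hpp (hclassAB hu₃A hv₁B)
    · exact absurd hpp (hclassAB hu₃A hv₂B)
    · exact absurd hpp (Ne.symm (hclassAB hu₁A hv₁B))
    · exact absurd hpp (Ne.symm (hclassAB hu₂A hv₁B))
    · exact absurd hpp (Ne.symm (hclassAB hu₃A hv₁B))
    · rfl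
    · exact absurd hpp hv12
    · exact absurd hpp (Ne.symm (hclassAB hu₁A hv₂B))
    · exact absurd hpp (Ne.symm (hclassAB hu₂A hv₂B))
    · exact absurd hpp (Ne.symm (hclassAB hu₃A hv₂B))
    · exact absurd hpp hv12.symm
    · rfl
  -- group selector and global vertex map
  set sel : Finset V → Finset V → Finset V → Finset V → Fin 5 → Finset V :=
    fun e₁ e₂ e₃ e₄ g => if g = 1 then e₁ else if g = 2 then e₂
      else if g = 3 then e₃ else e₄ with hsel
  set W : Finset V → Finset V → Finset V → Finset V → Fin 5 → Fin 5 → V :=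
    fun e₁ e₂ e₃ e₄ g p => if g = 0 then r p else gv (sel e₁ e₂ e₃ e₄ g) p with hW
  set Idx : Fin 5 → Finset (Fin 5 × Fin 5) :=
    ![{(0,0),(1,0),(2,0),(3,3),(4,3)},
      {(0,1),(3,0),(4,0),(1,3),(2,3)},
      {(0,2),(1,1),(3,1),(2,4),(4,4)},
      {(0,3),(2,1),(3,2),(4,1),(1,4)},
      {(0,4),(1,2),(2,2),(4,2),(3,4)}] with hIdx
  have hIdisj : ∀ j j' : Fin 5, j ≠ j' → Disjoint (Idx j) (Idx j') := by decide
  have hIcard : ∀ j, (Idx j).card = 5 := by decide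
  have hIfilterA : ∀ j, ((Idx j).filter fun z => (z.2 : ℕ) < 3).card = 3 := by decide
  have hI0 : ∀ j, ((0 : Fin 5), j) ∈ Idx j := by decide
  set C : Fin 5 → Fin 4 → Fin 5 :=
    ![![0,0,3,3], ![3,3,0,0], ![1,4,1,4], ![4,1,2,1], ![2,2,4,2]] with hC
  have hCmem : ∀ (j : Fin 5) (i : Fin 4), ((i.succ : Fin 5), C j i) ∈ Idx j := by decide
  have hCga : ∀ (i : Fin 4), (i.succ : Fin 5) ≠ 0 := by decide
  have hCg : ∀ i : Fin 4, ((i.succ : Fin 5) : ℕ) = (i : ℕ) + 1 := by decide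
  -- selector facts
  have hselM : ∀ e₁ e₂ e₃ e₄ : Finset V, e₁ ∈ M → e₂ ∈ M → e₃ ∈ M → e₄ ∈ M →
      ∀ g : Fin 5, sel e₁ e₂ e₃ e₄ g ∈ M := by
    intro e₁ e₂ e₃ e₄ h1 h2 h3 h4 g
    rw [hsel]
    dsimp only
    split_ifs <;> assumption
  have hselne : ∀ e₁ ∈ S1, ∀ e₂ ∈ S2, ∀ e₃ ∈ S3, ∀ e₄ ∈ S4,
      ∀ g g' : Fin 5, g ≠ 0 → g' ≠ 0 → g ≠ g' →
      sel e₁ e₂ e₃ e₄ g ≠ sel e₁ e₂ e₃ e₄ g' := by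
    intro e₁ h1 e₂ h2 e₃ h3 e₄ h4 g g' hg hg' hgg'
    have he12 : e₁ ≠ e₂ := fun e => disjoint_left.mp hd12 h1 (e ▸ h2)
    have he13 : e₁ ≠ e₃ := fun e => disjoint_left.mp hd13 h1 (e ▸ h3)
    have he14 : e₁ ≠ e₄ := fun e => disjoint_left.mp hd14 h1 (e ▸ h4)
    have he23 : e₂ ≠ e₃ := fun e => disjoint_left.mp hd23 h2 (e ▸ h3)
    have he24 : e₂ ≠ e₄ := fun e => disjoint_left.mp hd24 h2 (e ▸ h4)
    have he34 : e₃ ≠ e₄ := fun e => disjoint_left.mp hd34 h3 (e ▸ h4)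
    fin_cases g <;> fin_cases g' <;>
      first
        | exact absurd rfl hg
        | exact absurd rfl hg'
        | exact absurd rfl hgg'
        | exact he12 | exact he13 | exact he14 | exact he23 | exact he24 | exact he34
        | exact he12.symm | exact he13.symm | exact he14.symm
        | exact he23.symm | exact he24.symm | exact he34.symm
  -- W facts (for edges in M)
  have hW0 : ∀ e₁ e₂ e₃ e₄ (p : Fin 5), W e₁ e₂ e₃ e₄ 0 p = r p := by
    intro e₁ e₂ e₃ e₄ p
    rw [hW]
    rfl
  have hWg : ∀ e₁ e₂ e₃ e₄ (g : Fin 5), g ≠ 0 → ∀ p,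
      W e₁ e₂ e₃ e₄ g p = gv (sel e₁ e₂ e₃ e₄ g) p := by
    intro e₁ e₂ e₃ e₄ g hg p
    rw [hW]
    simp only [if_neg hg]
  have hWmemsel : ∀ e₁ e₂ e₃ e₄, e₁ ∈ M → e₂ ∈ M → e₃ ∈ M → e₄ ∈ M →
      ∀ (g : Fin 5), g ≠ 0 → ∀ p, W e₁ e₂ e₃ e₄ g p ∈ sel e₁ e₂ e₃ e₄ g := by
    intro e₁ e₂ e₃ e₄ h1 h2 h3 h4 g hg p
    rw [hWg _ _ _ _ g hg]
    exact gv_mem _ (hselM _ _ _ _ h1 h2 h3 h4 g) p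
  have hWA : ∀ e₁ e₂ e₃ e₄, e₁ ∈ M → e₂ ∈ M → e₃ ∈ M → e₄ ∈ M →
      ∀ (g p : Fin 5), (p : ℕ) < 3 → W e₁ e₂ e₃ e₄ g p ∈ A := by
    intro e₁ e₂ e₃ e₄ h1 h2 h3 h4 g p hp
    by_cases hg : g = 0
    · rw [hg, hW0]; exact r_A p hp
    · rw [hWg _ _ _ _ g hg]
      exact mem_of_mem_inter_right (gv_memA _ (hselM _ _ _ _ h1 h2 h3 h4 g) p hp)
  have hWB : ∀ e₁ e₂ e₃ e₄, e₁ ∈ M → e₂ ∈ M → e₃ ∈ M → e₄ ∈ M →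
      ∀ (g p : Fin 5), ¬ ((p : ℕ) < 3) → W e₁ e₂ e₃ e₄ g p ∈ B := by
    intro e₁ e₂ e₃ e₄ h1 h2 h3 h4 g p hp
    by_cases hg : g = 0
    · rw [hg, hW0]; exact r_B p hp
    · rw [hWg _ _ _ _ g hg]
      exact mem_of_mem_inter_right (gv_memB _ (hselM _ _ _ _ h1 h2 h3 h4 g) p hp)
  have hWinj : ∀ e₁ ∈ S1, ∀ e₂ ∈ S2, ∀ e₃ ∈ S3, ∀ e₄ ∈ S4,
      ∀ g p g' p', W e₁ e₂ e₃ e₄ g p = W e₁ e₂ e₃ e₄ g' p' → g = g' ∧ p = p' := by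
    intro e₁ h1 e₂ h2 e₃ h3 e₄ h4 g p g' p' heq
    have m1 : e₁ ∈ M := hS1 h1
    have m2 : e₂ ∈ M := hS2 h2
    have m3 : e₃ ∈ M := hS3 h3
    have m4 : e₄ ∈ M := hS4 h4
    by_cases hg : g = 0 <;> by_cases hg' : g' = 0
    · subst hg; subst hg'
      rw [hW0, hW0] at heq
      exact ⟨rfl, r_inj _ _ heq⟩
    · exfalso
      subst hg
      rw [hW0, hWg _ _ _ _ g' hg'] at heq
      refine r_out p (mem_biUnion.mpr ⟨sel e₁ e₂ e₃ e₄ g', hselM _ _ _ _ m1 m2 m3 m4 g', ?_⟩)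
      rw [heq]
      exact gv_mem _ (hselM _ _ _ _ m1 m2 m3 m4 g') p'
    · exfalso
      subst hg'
      rw [hW0, hWg _ _ _ _ g hg] at heq
      refine r_out p' (mem_biUnion.mpr ⟨sel e₁ e₂ e₃ e₄ g, hselM _ _ _ _ m1 m2 m3 m4 g, ?_⟩)
      rw [← heq]
      exact gv_mem _ (hselM _ _ _ _ m1 m2 m3 m4 g) p
    · rw [hWg _ _ _ _ g hg, hWg _ _ _ _ g' hg'] at heq
      by_cases hgg : g = g'
      · subst hgg
        exact ⟨rfl, gv_inj _ (hselM _ _ _ _ m1 m2 m3 m4 g) _ _ heq⟩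
      · exfalso
        refine hselne e₁ h1 e₂ h2 e₃ h3 e₄ h4 g g' hg hg' hgg ?_
        refine hMuniq _ (hselM _ _ _ _ m1 m2 m3 m4 g) _ (hselM _ _ _ _ m1 m2 m3 m4 g') _
          (gv_mem _ (hselM _ _ _ _ m1 m2 m3 m4 g) p) ?_
        rw [heq]
        exact gv_mem _ (hselM _ _ _ _ m1 m2 m3 m4 g') p'
  -- the parts
  set Pt : Fin 5 → Finset V → Finset V → Finset V → Finset V → Finset V :=
    fun j e₁ e₂ e₃ e₄ => (Idx j).image fun z => W e₁ e₂ e₃ e₄ z.1 z.2 with hPt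
  have hIfilterB : ∀ j, ((Idx j).filter fun z => ¬ ((z.2 : ℕ) < 3)).card = 2 := by decide
  have hPtcard : ∀ (j : Fin 5), ∀ e₁ ∈ S1, ∀ e₂ ∈ S2, ∀ e₃ ∈ S3, ∀ e₄ ∈ S4,
      (Pt j e₁ e₂ e₃ e₄).card = 5 := by
    intro j e₁ h1 e₂ h2 e₃ h3 e₄ h4
    rw [hPt]
    dsimp only
    rw [card_image_of_injOn, hIcard]
    intro z _ z' _ hzz
    have := hWinj e₁ h1 e₂ h2 e₃ h3 e₄ h4 z.1 z.2 z'.1 z'.2 hzz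
    exact Prod.ext this.1 this.2
  have hPtinterA : ∀ (j : Fin 5), ∀ e₁ ∈ S1, ∀ e₂ ∈ S2, ∀ e₃ ∈ S3, ∀ e₄ ∈ S4,
      (Pt j e₁ e₂ e₃ e₄ ∩ A) = ((Idx j).filter fun z => (z.2 : ℕ) < 3).image
        (fun z => W e₁ e₂ e₃ e₄ z.1 z.2) := by
    intro j e₁ h1 e₂ h2 e₃ h3 e₄ h4
    have m1 : e₁ ∈ M := hS1 h1
    have m2 : e₂ ∈ M := hS2 h2
    have m3 : e₃ ∈ M := hS3 h3
    have m4 : e₄ ∈ M := hS4 h4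
    ext x
    constructor
    · intro hx
      obtain ⟨hx1, hx2⟩ := mem_inter.mp hx
      rw [hPt] at hx1
      obtain ⟨z, hz, rfl⟩ := mem_image.mp hx1
      refine mem_image.mpr ⟨z, mem_filter.mpr ⟨hz, ?_⟩, rfl⟩
      by_contra hz3
      exact hclassAB hx2 (hWB _ _ _ _ m1 m2 m3 m4 z.1 z.2 hz3) rfl
    · intro hx
      obtain ⟨z, hz, rfl⟩ := mem_image.mp hx
      obtain ⟨hz1, hz2⟩ := mem_filter.mp hz
      refine mem_inter.mpr ⟨?_, hWA _ _ _ _ m1 m2 m3 m4 z.1 z.2 hz2⟩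
      rw [hPt]
      exact mem_image.mpr ⟨z, hz1, rfl⟩
  have hPtinterB : ∀ (j : Fin 5), ∀ e₁ ∈ S1, ∀ e₂ ∈ S2, ∀ e₃ ∈ S3, ∀ e₄ ∈ S4,
      (Pt j e₁ e₂ e₃ e₄ ∩ B) = ((Idx j).filter fun z => ¬ ((z.2 : ℕ) < 3)).image
        (fun z => W e₁ e₂ e₃ e₄ z.1 z.2) := by
    intro j e₁ h1 e₂ h2 e₃ h3 e₄ h4
    have m1 : e₁ ∈ M := hS1 h1
    have m2 : e₂ ∈ M := hS2 h2
    have m3 : e₃ ∈ M := hS3 h3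
    have m4 : e₄ ∈ M := hS4 h4
    ext x
    constructor
    · intro hx
      obtain ⟨hx1, hx2⟩ := mem_inter.mp hx
      rw [hPt] at hx1
      obtain ⟨z, hz, rfl⟩ := mem_image.mp hx1
      refine mem_image.mpr ⟨z, mem_filter.mpr ⟨hz, ?_⟩, rfl⟩
      intro hz3
      exact hclassAB (hWA _ _ _ _ m1 m2 m3 m4 z.1 z.2 hz3) hx2 rfl
    · intro hx
      obtain ⟨z, hz, rfl⟩ := mem_image.mp hx
      obtain ⟨hz1, hz2⟩ := mem_filter.mp hz
      refine mem_inter.mpr ⟨?_, hWB _ _ _ _ m1 m2 m3 m4 z.1 z.2 hz2⟩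
      rw [hPt]
      exact mem_image.mpr ⟨z, hz1, rfl⟩
  have hPtA : ∀ (j : Fin 5), ∀ e₁ ∈ S1, ∀ e₂ ∈ S2, ∀ e₃ ∈ S3, ∀ e₄ ∈ S4,
      (Pt j e₁ e₂ e₃ e₄ ∩ A).card = 3 := by
    intro j e₁ h1 e₂ h2 e₃ h3 e₄ h4
    rw [hPtinterA j e₁ h1 e₂ h2 e₃ h3 e₄ h4, card_image_of_injOn, hIfilterA]
    intro z hz z' hz' hzz
    have := hWinj e₁ h1 e₂ h2 e₃ h3 e₄ h4 z.1 z.2 z'.1 z'.2 hzz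
    exact Prod.ext this.1 this.2
  have hPtB : ∀ (j : Fin 5), ∀ e₁ ∈ S1, ∀ e₂ ∈ S2, ∀ e₃ ∈ S3, ∀ e₄ ∈ S4,
      (Pt j e₁ e₂ e₃ e₄ ∩ B).card = 2 := by
    intro j e₁ h1 e₂ h2 e₃ h3 e₄ h4
    rw [hPtinterB j e₁ h1 e₂ h2 e₃ h3 e₄ h4, card_image_of_injOn, hIfilterB]
    intro z hz z' hz' hzz
    have := hWinj e₁ h1 e₂ h2 e₃ h3 e₄ h4 z.1 z.2 z'.1 z'.2 hzz
    exact Prod.ext this.1 this.2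
  have hroot : ∀ (j : Fin 5), ∀ e₁ e₂ e₃ e₄, r j ∈ Pt j e₁ e₂ e₃ e₄ := by
    intro j e₁ e₂ e₃ e₄
    rw [hPt]
    exact mem_image.mpr ⟨((0 : Fin 5), j), hI0 j, hW0 _ _ _ _ j⟩
  have hPtdisj : ∀ (j j' : Fin 5), j ≠ j' → ∀ e₁ ∈ S1, ∀ e₂ ∈ S2, ∀ e₃ ∈ S3, ∀ e₄ ∈ S4,
      Disjoint (Pt j e₁ e₂ e₃ e₄) (Pt j' e₁ e₂ e₃ e₄) := by
    intro j j' hjj e₁ h1 e₂ h2 e₃ h3 e₄ h4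
    rw [disjoint_left]
    intro x hx hx'
    rw [hPt] at hx hx'
    obtain ⟨z, hz, rfl⟩ := mem_image.mp hx
    obtain ⟨z', hz', hzz⟩ := mem_image.mp hx'
    have := hWinj e₁ h1 e₂ h2 e₃ h3 e₄ h4 z'.1 z'.2 z.1 z.2 hzz
    have hzeq : z' = z := Prod.ext this.1 this.2
    exact disjoint_left.mp (hIdisj j j' hjj) hz (hzeq ▸ hz')
  have hPtM : ∀ (j : Fin 5), ∀ e₁ ∈ S1, ∀ e₂ ∈ S2, ∀ e₃ ∈ S3, ∀ e₄ ∈ S4,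
      ∀ f ∈ M, f ≠ e₁ → f ≠ e₂ → f ≠ e₃ → f ≠ e₄ → Disjoint f (Pt j e₁ e₂ e₃ e₄) := by
    intro j e₁ h1 e₂ h2 e₃ h3 e₄ h4 f hf hf1 hf2 hf3 hf4
    have m1 : e₁ ∈ M := hS1 h1
    have m2 : e₂ ∈ M := hS2 h2
    have m3 : e₃ ∈ M := hS3 h3
    have m4 : e₄ ∈ M := hS4 h4
    have hselcases : ∀ g : Fin 5, sel e₁ e₂ e₃ e₄ g = e₁ ∨ sel e₁ e₂ e₃ e₄ g = e₂ ∨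
        sel e₁ e₂ e₃ e₄ g = e₃ ∨ sel e₁ e₂ e₃ e₄ g = e₄ := by
      intro g
      rw [hsel]
      dsimp only
      split_ifs <;> tauto
    rw [disjoint_left]
    intro x hxf hxP
    rw [hPt] at hxP
    obtain ⟨z, hz, rfl⟩ := mem_image.mp hxP
    by_cases hg : z.1 = 0
    · rw [hg, hW0] at hxf
      exact r_out z.2 (mem_biUnion.mpr ⟨f, hf, hxf⟩)
    · have hmem := hWmemsel _ _ _ _ m1 m2 m3 m4 z.1 hg z.2
      have heq := hMuniq f hf _ (hselM _ _ _ _ m1 m2 m3 m4 z.1) _ hxf hmem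
      rcases hselcases z.1 with h | h | h | h
      · exact hf1 (heq.trans h)
      · exact hf2 (heq.trans h)
      · exact hf3 (heq.trans h)
      · exact hf4 (heq.trans h)
  -- tuples and counting
  set Tup : Finset (Finset V × Finset V × Finset V × Finset V) :=
    S1 ×ˢ S2 ×ˢ S3 ×ˢ S4 with hTup
  set Ptt : Fin 5 → Finset V × Finset V × Finset V × Finset V → Finset V :=
    fun j t => Pt j t.1 t.2.1 t.2.2.1 t.2.2.2 with hPtt
  have hTupcard : Tup.card = q ^ 4 := by
    rw [hTup, card_product, card_product, card_product, hq1, hq2, hq3, hq4]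
    ring
  have hTupmem : ∀ t ∈ Tup, t.1 ∈ S1 ∧ t.2.1 ∈ S2 ∧ t.2.2.1 ∈ S3 ∧ t.2.2.2 ∈ S4 := by
    intro t ht
    rw [hTup] at ht
    simp only [mem_product] at ht
    exact ⟨ht.1, ht.2.1, ht.2.2.1, ht.2.2.2⟩
  -- the selectors applied to the four nonzero groups
  have hsel1 : ∀ e₁ e₂ e₃ e₄ : Finset V,
      sel e₁ e₂ e₃ e₄ ((0 : Fin 4).succ) = e₁ := fun _ _ _ _ => rfl
  have hsel2 : ∀ e₁ e₂ e₃ e₄ : Finset V,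
      sel e₁ e₂ e₃ e₄ ((1 : Fin 4).succ) = e₂ := fun _ _ _ _ => rfl
  have hsel3 : ∀ e₁ e₂ e₃ e₄ : Finset V,
      sel e₁ e₂ e₃ e₄ ((2 : Fin 4).succ) = e₃ := fun _ _ _ _ => rfl
  have hsel4 : ∀ e₁ e₂ e₃ e₄ : Finset V,
      sel e₁ e₂ e₃ e₄ ((3 : Fin 4).succ) = e₄ := fun _ _ _ _ => rfl
  -- bounding the bad tuples for each part index j
  have hBadj : ∀ j : Fin 5, (Tup.filter fun t => Ptt j t ∉ J).card
      ≤ 625 * (N.filter fun g => r j ∈ g).card := by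
    intro j
    set Badj := Tup.filter fun t => Ptt j t ∉ J with hBdef
    have himage : Badj.image (Ptt j) ⊆ N.filter fun g => r j ∈ g := by
      intro g hg
      obtain ⟨t, ht, rfl⟩ := mem_image.mp hg
      obtain ⟨htT, htJ⟩ := mem_filter.mp ht
      obtain ⟨m1, m2, m3, m4⟩ := hTupmem t htT
      refine mem_filter.mpr ⟨hNJ _ ?_ ?_ htJ, ?_⟩
      · exact hPtA j _ m1 _ m2 _ m3 _ m4
      · exact hPtB j _ m1 _ m2 _ m3 _ m4
      · exact hroot j _ _ _ _
    calc Badj.card ≤ 625 * (Badj.image (Ptt j)).card := by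
          refine Finset.card_le_mul_card_image (f := Ptt j) Badj 625 ?_
          intro a ha
          obtain ⟨t₀, ht₀, hta⟩ := mem_image.mp ha
          obtain ⟨ht₀T, _⟩ := mem_filter.mp ht₀
          obtain ⟨m1₀, m2₀, m3₀, m4₀⟩ := hTupmem t₀ ht₀T
          have hacard : a.card = 5 := by
            rw [← hta, hPtt]
            exact hPtcard j _ m1₀ _ m2₀ _ m3₀ _ m4₀
          have hsub : Badj.filter (fun t => Ptt j t = a) ⊆ Badj := filter_subset _ _
          -- inject fibers into a ×ˢ a ×ˢ a ×ˢ a via the four contact vertices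
          have hinj : (Badj.filter (fun t => Ptt j t = a)).card
              ≤ (a ×ˢ a ×ˢ a ×ˢ a).card := by
            refine Finset.card_le_card_of_injOn (fun t =>
              (W t.1 t.2.1 t.2.2.1 t.2.2.2 ((0 : Fin 4).succ) (C j 0),
               W t.1 t.2.1 t.2.2.1 t.2.2.2 ((1 : Fin 4).succ) (C j 1),
               W t.1 t.2.1 t.2.2.1 t.2.2.2 ((2 : Fin 4).succ) (C j 2),
               W t.1 t.2.1 t.2.2.1 t.2.2.2 ((3 : Fin 4).succ) (C j 3))) ?_ ?_
            · intro t ht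
              obtain ⟨htB, hPa⟩ := mem_filter.mp ht
              have hcontact : ∀ i : Fin 4,
                  W t.1 t.2.1 t.2.2.1 t.2.2.2 (i.succ) (C j i) ∈ a := by
                intro i
                rw [← hPa, hPtt, hPt]
                exact mem_image.mpr ⟨(i.succ, C j i), hCmem j i, rfl⟩
              simp only [mem_coe, mem_product]
              exact ⟨hcontact 0, hcontact 1, hcontact 2, hcontact 3⟩
            · intro t ht t' ht' heq
              obtain ⟨htB, hPa⟩ := mem_filter.mp ht
              obtain ⟨ht'B, hP'a⟩ := mem_filter.mp ht'
              obtain ⟨m1, m2, m3, m4⟩ := hTupmem t (mem_filter.mp htB).1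
              obtain ⟨m1', m2', m3', m4'⟩ := hTupmem t' (mem_filter.mp ht'B).1
              simp only [Prod.mk.injEq] at heq
              obtain ⟨q1, q2, q3, q4⟩ := heq
              have key : ∀ i : Fin 4,
                  W t.1 t.2.1 t.2.2.1 t.2.2.2 (i.succ) (C j i)
                    = W t'.1 t'.2.1 t'.2.2.1 t'.2.2.2 (i.succ) (C j i) →
                  sel t.1 t.2.1 t.2.2.1 t.2.2.2 (i.succ)
                    = sel t'.1 t'.2.1 t'.2.2.1 t'.2.2.2 (i.succ) := by
                intro i hi
                refine hMuniq _ (hselM _ _ _ _ (hS1 m1) (hS2 m2) (hS3 m3) (hS4 m4) _)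
                  _ (hselM _ _ _ _ (hS1 m1') (hS2 m2') (hS3 m3') (hS4 m4') _) _
                  (hWmemsel _ _ _ _ (hS1 m1) (hS2 m2) (hS3 m3) (hS4 m4) _ (hCga i) (C j i)) ?_
                rw [hi]
                exact hWmemsel _ _ _ _ (hS1 m1') (hS2 m2') (hS3 m3') (hS4 m4') _
                  (hCga i) (C j i)
              have k1 := key 0 q1
              have k2 := key 1 q2
              have k3 := key 2 q3
              have k4 := key 3 q4
              rw [hsel1, hsel1] at k1
              rw [hsel2, hsel2] at k2
              rw [hsel3, hsel3] at k3
              rw [hsel4, hsel4] at k4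
              exact Prod.ext k1 (Prod.ext k2 (Prod.ext k3 k4))
          refine le_trans hinj ?_
          rw [card_product, card_product, card_product, hacard]
      _ ≤ 625 * (N.filter fun g => r j ∈ g).card :=
          Nat.mul_le_mul_left _ (card_le_card himage)
  -- there is a tuple all of whose parts are edges
  have hgood : ∃ t ∈ Tup, ∀ j : Fin 5, Ptt j t ∈ J := by
    by_contra hcon
    push_neg at hcon
    let X : Fin 5 → Finset (Finset V × Finset V × Finset V × Finset V) :=
      fun j => Tup.filter fun t => Ptt j t ∉ J
    have hsub : Tup ⊆ X 0 ∪ X 1 ∪ X 2 ∪ X 3 ∪ X 4 := by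
      intro t ht
      obtain ⟨j, hj⟩ := hcon t ht
      have hmem : t ∈ X j := mem_filter.mpr ⟨ht, hj⟩
      fin_cases j
      · exact mem_union_left _ (mem_union_left _ (mem_union_left _ (mem_union_left _ hmem)))
      · exact mem_union_left _ (mem_union_left _ (mem_union_left _ (mem_union_right _ hmem)))
      · exact mem_union_left _ (mem_union_left _ (mem_union_right _ hmem))
      · exact mem_union_left _ (mem_union_right _ hmem)
      · exact mem_union_right _ hmem
    have hcard : q ^ 4 ≤ (X 0).card + (X 1).card + (X 2).card + (X 3).card + (X 4).card := by
      calc q ^ 4 = Tup.card := hTupcard.symm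
        _ ≤ (X 0 ∪ X 1 ∪ X 2 ∪ X 3 ∪ X 4).card := card_le_card hsub
        _ ≤ (X 0 ∪ X 1 ∪ X 2 ∪ X 3).card + (X 4).card := card_union_le _ _
        _ ≤ ((X 0 ∪ X 1 ∪ X 2).card + (X 3).card) + (X 4).card :=
            Nat.add_le_add_right (card_union_le _ _) _
        _ ≤ (((X 0 ∪ X 1).card + (X 2).card) + (X 3).card) + (X 4).card :=
            Nat.add_le_add_right (Nat.add_le_add_right (card_union_le _ _) _) _
        _ ≤ ((((X 0).card + (X 1).card) + (X 2).card) + (X 3).card) + (X 4).card :=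
            Nat.add_le_add_right (Nat.add_le_add_right
              (Nat.add_le_add_right (card_union_le _ _) _) _) _
    have hr0 : r 0 = u₁ := rfl
    have hr1 : r 1 = u₂ := rfl
    have hr2 : r 2 = u₃ := rfl
    have hr3 : r 3 = v₁ := rfl
    have hr4 : r 4 = v₂ := rfl
    have b0 := hBadj 0
    have b1 := hBadj 1
    have b2 := hBadj 2
    have b3 := hBadj 3
    have b4 := hBadj 4
    rw [hr0] at b0
    rw [hr1] at b1
    rw [hr2] at b2
    rw [hr3] at b3
    rw [hr4] at b4
    have : q ^ 4 ≤ 625 * ((N.filter fun g => u₁ ∈ g).card + (N.filter fun g => u₂ ∈ g).card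
        + (N.filter fun g => u₃ ∈ g).card + (N.filter fun g => v₁ ∈ g).card
        + (N.filter fun g => v₂ ∈ g).card) := by
      have c0 : (X 0).card ≤ 625 * (N.filter fun g => u₁ ∈ g).card := b0
      have c1 : (X 1).card ≤ 625 * (N.filter fun g => u₂ ∈ g).card := b1
      have c2 : (X 2).card ≤ 625 * (N.filter fun g => u₃ ∈ g).card := b2
      have c3 : (X 3).card ≤ 625 * (N.filter fun g => v₁ ∈ g).card := b3
      have c4 : (X 4).card ≤ 625 * (N.filter fun g => v₂ ∈ g).card := b4
      omega
    omega
  -- construct the larger matching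
  obtain ⟨t, htT, htJ⟩ := hgood
  obtain ⟨m1, m2, m3, m4⟩ := hTupmem t htT
  have mm1 : t.1 ∈ M := hS1 m1
  have mm2 : t.2.1 ∈ M := hS2 m2
  have mm3 : t.2.2.1 ∈ M := hS3 m3
  have mm4 : t.2.2.2 ∈ M := hS4 m4
  have he12 : t.1 ≠ t.2.1 := fun e => disjoint_left.mp hd12 m1 (e ▸ m2)
  have he13 : t.1 ≠ t.2.2.1 := fun e => disjoint_left.mp hd13 m1 (e ▸ m3)
  have he14 : t.1 ≠ t.2.2.2 := fun e => disjoint_left.mp hd14 m1 (e ▸ m4)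
  have he23 : t.2.1 ≠ t.2.2.1 := fun e => disjoint_left.mp hd23 m2 (e ▸ m3)
  have he24 : t.2.1 ≠ t.2.2.2 := fun e => disjoint_left.mp hd24 m2 (e ▸ m4)
  have he34 : t.2.2.1 ≠ t.2.2.2 := fun e => disjoint_left.mp hd34 m3 (e ▸ m4)
  set H4 : Finset (Finset V) := {t.1, t.2.1, t.2.2.1, t.2.2.2} with hH4
  have hH4sub : H4 ⊆ M := by
    intro f hf
    rw [hH4] at hf
    simp only [mem_insert, mem_singleton] at hf
    rcases hf with rfl | rfl | rfl | rfl
    · exact mm1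
    · exact mm2
    · exact mm3
    · exact mm4
  have hH4card : H4.card = 4 := by
    rw [hH4]
    rw [card_insert_of_notMem (by simp [he12, he13, he14]),
      card_insert_of_notMem (by simp [he23, he24]),
      card_insert_of_notMem (by simp [he34]), card_singleton]
  set Parts : Finset (Finset V) := (univ : Finset (Fin 5)).image (fun j => Ptt j t) with hPs
  have hPtt_ne : ∀ j j' : Fin 5, j ≠ j' → Ptt j t ≠ Ptt j' t := by
    intro j j' hjj heq
    have h1 : r j ∈ Ptt j t := hroot j _ _ _ _
    have h2 : r j ∈ Ptt j' t := heq ▸ h1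
    exact disjoint_left.mp (hPtdisj j j' hjj _ m1 _ m2 _ m3 _ m4) h1 h2
  have hPartscard : Parts.card = 5 := by
    rw [hPs, card_image_of_injOn, card_univ, Fintype.card_fin]
    intro j _ j' _ heq
    by_contra hjj
    exact hPtt_ne j j' hjj heq
  have hPartsJ : ∀ f ∈ Parts, f ∈ J := by
    intro f hf
    rw [hPs] at hf
    obtain ⟨j, _, rfl⟩ := mem_image.mp hf
    exact htJ j
  have hdisjMP : Disjoint (M \ H4) Parts := by
    rw [disjoint_left]
    intro f hf hfP
    obtain ⟨j, _, rfl⟩ := mem_image.mp (hPs ▸ hfP)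
    have hfM : Ptt j t ∈ M := (mem_sdiff.mp hf).1
    exact r_out j (mem_biUnion.mpr ⟨_, hfM, hroot j _ _ _ _⟩)
  have hMH4 : ∀ f ∈ M \ H4, f ≠ t.1 ∧ f ≠ t.2.1 ∧ f ≠ t.2.2.1 ∧ f ≠ t.2.2.2 := by
    intro f hf
    have := (mem_sdiff.mp hf).2
    rw [hH4] at this
    simp only [mem_insert, mem_singleton, not_or] at this
    exact this
  refine ⟨(M \ H4) ∪ Parts, ?_, ?_, ?_, ?_⟩
  · intro f hf
    rcases mem_union.mp hf with hf | hf
    · exact hMJ (mem_sdiff.mp hf).1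
    · exact hPartsJ f hf
  · intro x hx y hy hne
    rw [mem_coe, mem_union] at hx hy
    have hPtM' : ∀ (j : Fin 5), ∀ f ∈ M \ H4, Disjoint f (Ptt j t) := by
      intro j f hf
      obtain ⟨n1, n2, n3, n4⟩ := hMH4 f hf
      exact hPtM j _ m1 _ m2 _ m3 _ m4 f (mem_sdiff.mp hf).1 n1 n2 n3 n4
    rcases hx with hx | hx <;> rcases hy with hy | hy
    · exact hMpd (mem_coe.mpr (mem_sdiff.mp hx).1) (mem_coe.mpr (mem_sdiff.mp hy).1) hne
    · obtain ⟨j, _, rfl⟩ := mem_image.mp (hPs ▸ hy)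
      exact hPtM' j x hx
    · obtain ⟨j, _, rfl⟩ := mem_image.mp (hPs ▸ hx)
      exact (hPtM' j y hy).symm
    · obtain ⟨j, _, rfl⟩ := mem_image.mp (hPs ▸ hx)
      obtain ⟨j', _, rfl⟩ := mem_image.mp (hPs ▸ hy)
      have hjj : j ≠ j' := fun e => hne (by rw [e])
      exact hPtdisj j j' hjj _ m1 _ m2 _ m3 _ m4
  · intro f hf
    obtain ⟨hfM, hfS⟩ := mem_sdiff.mp hf
    refine mem_union_left _ (mem_sdiff.mpr ⟨hfM, ?_⟩)
    intro hfH
    rw [hH4] at hfH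
    simp only [mem_insert, mem_singleton] at hfH
    simp only [mem_union, not_or] at hfS
    rcases hfH with rfl | rfl | rfl | rfl
    · exact hfS.1.1.1 m1
    · exact hfS.1.1.2 m2
    · exact hfS.1.2 m3
    · exact hfS.2 m4
  · rw [card_union_of_disjoint hdisjMP, card_sdiff_of_subset hH4sub, hH4card, hPartscard]
    have : 4 ≤ M.card := hH4card ▸ card_le_card hH4sub
    omega


set_option maxHeartbeats 2000000 in
/-- There is `β0 > 0` such that for every `0 < β < β0` there is `n0` such that for all
`n ≥ n0`: if `A`, `B` partition a vertex set of size `5n` with `|A| = 3n`, `|B| = 2n`,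
and `J` is a 5-graph in which every edge has 3 vertices in `A` and 2 in `B`, with at
least `(1-β)·C(3n,3)·C(2n,2)` edges, and every vertex is in at least `n⁴/10⁸` edges,
then `J` has a perfect matching. -/
theorem auxiliary_matching :
    ∃ β0 : ℝ, 0 < β0 ∧ ∀ β : ℝ, 0 < β → β < β0 →
      ∃ n0 : ℕ, ∀ n : ℕ, n0 ≤ n →
        ∀ A B : Finset (Fin (5 * n)),
          Disjoint A B → A ∪ B = Finset.univ → A.card = 3 * n → B.card = 2 * n →
          ∀ J : Finset (Finset (Fin (5 * n))),
            (∀ e ∈ J, e.card = 5 ∧ (e ∩ A).card = 3 ∧ (e ∩ B).card = 2) →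
            (1 - β) * ((3 * n).choose 3 : ℝ) * ((2 * n).choose 2 : ℝ) ≤ (J.card : ℝ) →
            (∀ v : Fin (5 * n),
              (n : ℝ) ^ 4 / 10 ^ 8 ≤ ((J.filter fun e => v ∈ e).card : ℝ)) →
            ∃ M ⊆ J, (M : Set (Finset (Fin (5 * n)))).PairwiseDisjoint id ∧
              M.biUnion id = Finset.univ := by
  refine ⟨1/10^24, by norm_num, fun β hβ0 hβ =>
    ⟨10^7, fun n hn A B hAB hABu hA hB J hJ hJcard hJdeg => ?_⟩⟩
  classical
  have hn7 : (10^7 : ℕ) ≤ n := hn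
  have hnR : (10^7 : ℝ) ≤ (n:ℝ) := by exact_mod_cast hn
  have hnpos : (0:ℝ) < (n:ℝ) := lt_of_lt_of_le (by norm_num) hnR
  have hβle : β ≤ 1/10^24 := le_of_lt hβ
  have hJe : ∀ e ∈ J, (e ∩ A).card = 3 ∧ (e ∩ B).card = 2 :=
    fun e he => ⟨(hJ e he).2.1, (hJ e he).2.2⟩
  have hJ5 : ∀ e ∈ J, e.card = 5 := fun e he => (hJ e he).1
  set S32 := ((A.powersetCard 3) ×ˢ (B.powersetCard 2)).image (fun p => p.1 ∪ p.2) with hS32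
  have hsubuniv : ∀ e : Finset (Fin (5*n)), e ⊆ A ∪ B := by
    rw [hABu]; intro e; exact subset_univ e
  have hJS32 : J ⊆ S32 := fun e he => mem_unionImage e (hsubuniv e) (hJe e he).1 (hJe e he).2
  have hS32card : S32.card = (3*n).choose 3 * (2*n).choose 2 := by
    rw [hS32, card_unionImage A B hAB, hA, hB]
  have hS32mem : ∀ g ∈ S32, (g ∩ A).card = 3 ∧ (g ∩ B).card = 2 ∧ g.card = 5 := by
    intro g hg
    rw [hS32] at hg
    obtain ⟨p, hp, rfl⟩ := mem_image.mp hg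
    simp only [mem_product, mem_powersetCard] at hp
    obtain ⟨⟨hp1, hp1c⟩, hp2, hp2c⟩ := hp
    have hdisj : Disjoint p.1 p.2 := hAB.mono hp1 hp2
    refine ⟨?_, ?_, ?_⟩
    · rw [union_inter_eq hp1 hp2 hAB, hp1c]
    · rw [union_comm, union_inter_eq hp2 hp1 hAB.symm, hp2c]
    · rw [card_union_of_disjoint hdisj, hp1c, hp2c]
  set N := S32 \ J with hNdef
  have hNmem : ∀ g : Finset (Fin (5*n)), (g ∩ A).card = 3 → (g ∩ B).card = 2 → g ∉ J → g ∈ N :=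
    fun g h3 h2 hg => mem_sdiff.mpr ⟨mem_unionImage g (hsubuniv g) h3 h2, hg⟩
  -- bound on the number of non-edges
  have hNcardR : (N.card : ℝ) ≤ β * (((3*n).choose 3 : ℝ) * ((2*n).choose 2 : ℝ)) := by
    have h1 : N.card = S32.card - J.card := by rw [hNdef, card_sdiff_of_subset hJS32]
    have h2 : J.card ≤ S32.card := card_le_card hJS32
    have h3 : (N.card : ℝ) = (S32.card : ℝ) - (J.card : ℝ) := by
      rw [h1, Nat.cast_sub h2]
    have h4 : (S32.card : ℝ) = ((3*n).choose 3 : ℝ) * ((2*n).choose 2 : ℝ) := by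
      rw [hS32card]; push_cast; ring
    rw [h3, h4]
    nlinarith [hJcard]
  have hCCR : ((3*n).choose 3 : ℝ) * ((2*n).choose 2 : ℝ) ≤ 108 * (n:ℝ)^5 := by
    have h1 : (3*n).choose 3 ≤ (3*n)^3 := Nat.choose_le_pow _ _
    have h2 : (2*n).choose 2 ≤ (2*n)^2 := Nat.choose_le_pow _ _
    have h3 : (3*n).choose 3 * (2*n).choose 2 ≤ 108 * n^5 := by
      calc (3*n).choose 3 * (2*n).choose 2 ≤ (3*n)^3 * (2*n)^2 := Nat.mul_le_mul h1 h2
        _ = 108 * n^5 := by ring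
    calc ((3*n).choose 3 : ℝ) * ((2*n).choose 2 : ℝ) = (((3*n).choose 3 * (2*n).choose 2 : ℕ) : ℝ) := by push_cast; ring
      _ ≤ ((108 * n^5 : ℕ) : ℝ) := by exact_mod_cast h3
      _ = 108 * (n:ℝ)^5 := by push_cast; ring
  have hNsmall : (N.card : ℝ) ≤ 108/10^24 * (n:ℝ)^5 := by
    have hCCpos : (0:ℝ) ≤ ((3*n).choose 3 : ℝ) * ((2*n).choose 2 : ℝ) := by positivity
    nlinarith [hNcardR, hCCR, hβ0, hβle, pow_pos hnpos 5]
  -- degree sum and bad vertices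
  have hdegsum : ∑ v : Fin (5*n), ((N.filter fun g => v ∈ g).card) = 5 * N.card := by
    rw [sum_deg N]
    have h5 : ∀ g ∈ N, g.card = 5 := fun g hg => (hS32mem g (mem_sdiff.mp hg).1).2.2
    rw [sum_congr rfl h5, sum_const, smul_eq_mul, mul_comm]
  set Bad := univ.filter
    (fun v : Fin (5*n) => (n:ℝ)^4/10^8 < ((N.filter fun g => v ∈ g).card : ℝ)) with hBadDef
  have hBadsum : (Bad.card : ℝ) * ((n:ℝ)^4/10^8) ≤ 5 * (N.card:ℝ) := by
    have h1 : Bad.card • ((n:ℝ)^4/10^8) ≤ ∑ v ∈ Bad, ((N.filter fun g => v ∈ g).card : ℝ) := by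
      refine Finset.card_nsmul_le_sum _ _ _ ?_
      intro v hv
      exact le_of_lt (mem_filter.mp hv).2
    have h2 : ∑ v ∈ Bad, ((N.filter fun g => v ∈ g).card : ℝ)
        ≤ ∑ v : Fin (5*n), ((N.filter fun g => v ∈ g).card : ℝ) := by
      refine sum_le_sum_of_subset_of_nonneg (subset_univ _) ?_
      intro v _ _
      exact Nat.cast_nonneg _
    have h3 : ∑ v : Fin (5*n), ((N.filter fun g => v ∈ g).card : ℝ) = 5 * (N.card:ℝ) := by
      exact_mod_cast hdegsum
    rw [nsmul_eq_mul] at h1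
    linarith
  have hBadcard : (Bad.card : ℝ) ≤ (n:ℝ)/10^13 := by
    have h5 : (n:ℝ)^5 = (n:ℝ)^4 * n := by ring
    nlinarith [hBadsum, hNsmall, pow_pos hnpos 4, pow_pos hnpos 5]
  -- pair degree bound
  have hpair : ∀ v w : Fin (5*n), v ≠ w →
      ((J.filter fun e => v ∈ e ∧ w ∈ e).card) ≤ (5*n)^3 := by
    intro v w hvw
    have hinj : (J.filter fun e => v ∈ e ∧ w ∈ e).card
        ≤ ((univ : Finset (Fin (5*n))).powersetCard 3).card := by
      refine card_le_card_of_injOn (fun e => e \ {v, w}) ?_ ?_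
      · intro e he
        obtain ⟨heJ, hve, hwe⟩ := mem_filter.mp he
        have hsub : {v, w} ⊆ e := insert_subset hve (singleton_subset_iff.mpr hwe)
        have hc2 : ({v, w} : Finset (Fin (5*n))).card = 2 := by
          rw [card_insert_of_notMem (by simp [hvw]), card_singleton]
        refine mem_powersetCard.mpr ⟨subset_univ _, ?_⟩
        rw [card_sdiff_of_subset hsub, hc2, hJ5 e heJ]
      · intro e he e' he' heq
        obtain ⟨heJ, hve, hwe⟩ := mem_filter.mp he
        obtain ⟨heJ', hve', hwe'⟩ := mem_filter.mp he'
        have h1 : e \ {v,w} ∪ {v,w} = e :=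
          sdiff_union_of_subset (insert_subset hve (singleton_subset_iff.mpr hwe))
        have h2 : e' \ {v,w} ∪ {v,w} = e' :=
          sdiff_union_of_subset (insert_subset hve' (singleton_subset_iff.mpr hwe'))
        simp only at heq
        rw [← h1, ← h2, heq]
    calc (J.filter fun e => v ∈ e ∧ w ∈ e).card
        ≤ ((univ : Finset (Fin (5*n))).powersetCard 3).card := hinj
      _ = (5*n).choose 3 := by rw [card_powersetCard, card_univ, Fintype.card_fin]
      _ ≤ (5*n)^3 := Nat.choose_le_pow _ _
  -- greedy covering of bad vertices
  have hstep : ∀ v ∈ Bad, ∀ U : Finset (Fin (5*n)), U.card ≤ 5 * Bad.card → v ∉ U →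
      ∃ e ∈ J, v ∈ e ∧ Disjoint e U := by
    intro v hv U hU hvU
    have hdegv := hJdeg v
    have hJbadsub : (J.filter fun e => v ∈ e).filter (fun e => ¬ Disjoint e U)
        ⊆ U.biUnion (fun w => J.filter fun e => v ∈ e ∧ w ∈ e) := by
      intro e he
      obtain ⟨hev, hnd⟩ := mem_filter.mp he
      obtain ⟨heJ, hv'⟩ := mem_filter.mp hev
      obtain ⟨w, hwe, hwU⟩ := Finset.not_disjoint_iff.mp hnd
      exact mem_biUnion.mpr ⟨w, hwU, mem_filter.mpr ⟨heJ, hv', hwe⟩⟩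
    have hJbadcard : ((J.filter fun e => v ∈ e).filter (fun e => ¬ Disjoint e U)).card
        ≤ U.card * (5*n)^3 := by
      calc _ ≤ (U.biUnion (fun w => J.filter fun e => v ∈ e ∧ w ∈ e)).card :=
            card_le_card hJbadsub
        _ ≤ ∑ w ∈ U, (J.filter fun e => v ∈ e ∧ w ∈ e).card := card_biUnion_le
        _ ≤ ∑ _w ∈ U, (5*n)^3 := by
            refine sum_le_sum fun w hw => ?_
            exact hpair v w (fun h => hvU (h ▸ hw))
        _ = U.card * (5*n)^3 := by rw [sum_const, smul_eq_mul]
    have hsplit := card_filter_add_card_filter_not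
      (s := J.filter fun e => v ∈ e) (p := fun e => Disjoint e U)
    have hpos : 0 < ((J.filter fun e => v ∈ e).filter (fun e => Disjoint e U)).card := by
      by_contra h0
      push_neg at h0
      have h00 : ((J.filter fun e => v ∈ e).filter (fun e => Disjoint e U)).card = 0 := by omega
      have hle : ((J.filter fun e => v ∈ e).card : ℝ) ≤ (U.card : ℝ) * (5*(n:ℝ))^3 := by
        have : (J.filter fun e => v ∈ e).card ≤ U.card * (5*n)^3 := by omega
        calc ((J.filter fun e => v ∈ e).card : ℝ) ≤ ((U.card * (5*n)^3 : ℕ) : ℝ) := by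
              exact_mod_cast this
          _ = (U.card : ℝ) * (5*(n:ℝ))^3 := by push_cast; ring
      have hUR : (U.card : ℝ) ≤ 5 * ((n:ℝ)/10^13) := by
        calc (U.card : ℝ) ≤ ((5 * Bad.card : ℕ) : ℝ) := by exact_mod_cast hU
          _ = 5 * (Bad.card : ℝ) := by push_cast; ring
          _ ≤ 5 * ((n:ℝ)/10^13) := by linarith [hBadcard]
      have hn4 : (0:ℝ) < (n:ℝ)^4 := pow_pos hnpos 4
      nlinarith [hdegv, hle, hUR, pow_pos hnpos 3, pow_pos hnpos 4,
        mul_pos (mul_pos hnpos hnpos) (mul_pos hnpos hnpos)]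
    obtain ⟨e, he⟩ := card_pos.mp hpos
    obtain ⟨hev, hed⟩ := mem_filter.mp he
    obtain ⟨heJ, hve⟩ := mem_filter.mp hev
    exact ⟨e, heJ, hve, hed⟩
  obtain ⟨M₀, hM₀J, hM₀pd, hM₀cov, hM₀card⟩ := greedy_cover J hJ5 Bad hstep
  -- maximal matching extending M₀
  have hdec : DecidablePred (fun X : Finset (Finset (Fin (5*n))) =>
      M₀ ⊆ X ∧ (X : Set (Finset (Fin (5*n)))).PairwiseDisjoint id) :=
    fun _ => Classical.propDecidable _
  set Cand := J.powerset.filter (fun X => M₀ ⊆ X ∧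
    (X : Set (Finset (Fin (5*n)))).PairwiseDisjoint id) with hCand
  have hM₀Cand : M₀ ∈ Cand := by
    rw [hCand]
    exact mem_filter.mpr ⟨mem_powerset.mpr hM₀J, subset_rfl, hM₀pd⟩
  obtain ⟨M, hMCand, hmax⟩ := Finset.exists_max_image Cand card ⟨M₀, hM₀Cand⟩
  have hMJ : M ⊆ J := mem_powerset.mp (mem_filter.mp hMCand).1
  have hM₀M : M₀ ⊆ M := (mem_filter.mp hMCand).2.1
  have hMpd : (M : Set (Finset (Fin (5*n)))).PairwiseDisjoint id :=
    (mem_filter.mp hMCand).2.2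
  have hMdisj : ∀ x ∈ M, ∀ y ∈ M, x ≠ y → Disjoint (id x) (id y) :=
    fun x hx y hy hxy => hMpd (mem_coe.mpr hx) (mem_coe.mpr hy) hxy
  have hsupcard : (M.biUnion id).card = 5 * M.card := by
    rw [card_biUnion hMdisj]
    have h5 : ∀ e ∈ M, (id e).card = 5 := fun e he => hJ5 e (hMJ he)
    rw [sum_congr rfl h5, sum_const, smul_eq_mul, mul_comm]
  have hMle : M.card ≤ n := by
    have h1 : (M.biUnion id).card ≤ 5 * n := by
      calc (M.biUnion id).card ≤ (univ : Finset (Fin (5*n))).card := card_le_card (subset_univ _)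
        _ = 5*n := by rw [card_univ, Fintype.card_fin]
    omega
  -- the main claim : M.card = n
  have hMcard : M.card = n := by
    by_contra hne
    have hlt : M.card < n := lt_of_le_of_ne hMle hne
    set R := (univ : Finset (Fin (5*n))) \ M.biUnion id with hRdef
    have hRsup : ∀ x ∈ R, x ∉ M.biUnion id := fun x hx => (mem_sdiff.mp hx).2
    have hsupAcard : (M.biUnion id ∩ A).card = 3 * M.card := by
      have hsupA : (M.biUnion id ∩ A) = M.biUnion (fun e => e ∩ A) := by
        ext x
        simp only [mem_inter, mem_biUnion, id]
        tauto
      rw [hsupA, card_biUnion]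
      · have h3 : ∀ e ∈ M, (e ∩ A).card = 3 := fun e he => (hJe e (hMJ he)).1
        rw [sum_congr rfl h3, sum_const, smul_eq_mul, mul_comm]
      · intro x hx y hy hxy
        exact (hMdisj x hx y hy hxy).mono inter_subset_left inter_subset_left
    have hsupBcard : (M.biUnion id ∩ B).card = 2 * M.card := by
      have hsupB : (M.biUnion id ∩ B) = M.biUnion (fun e => e ∩ B) := by
        ext x
        simp only [mem_inter, mem_biUnion, id]
        tauto
      rw [hsupB, card_biUnion]
      · have h2 : ∀ e ∈ M, (e ∩ B).card = 2 := fun e he => (hJe e (hMJ he)).2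
        rw [sum_congr rfl h2, sum_const, smul_eq_mul, mul_comm]
      · intro x hx y hy hxy
        exact (hMdisj x hx y hy hxy).mono inter_subset_left inter_subset_left
    have hRA : (R ∩ A).card = 3 * (n - M.card) := by
      have h1 : R ∩ A = A \ (M.biUnion id ∩ A) := by
        ext x
        simp only [hRdef, mem_inter, mem_sdiff, mem_univ, true_and]
        tauto
      rw [h1, card_sdiff_of_subset inter_subset_right, hsupAcard, hA]
      omega
    have hRB : (R ∩ B).card = 2 * (n - M.card) := by
      have h1 : R ∩ B = B \ (M.biUnion id ∩ B) := by
        ext x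
        simp only [hRdef, mem_inter, mem_sdiff, mem_univ, true_and]
        tauto
      rw [h1, card_sdiff_of_subset inter_subset_right, hsupBcard, hB]
      omega
    by_cases hedge : ∃ e ∈ J, e ⊆ R
    · obtain ⟨e, heJ, heR⟩ := hedge
      have hene : e.Nonempty := by
        rw [← card_pos, hJ5 e heJ]; norm_num
      have heM : e ∉ M := by
        intro hmem
        obtain ⟨x, hxe⟩ := hene
        exact hRsup x (heR hxe) (mem_biUnion.mpr ⟨e, hmem, hxe⟩)
      have hCand' : insert e M ∈ Cand := by
        rw [hCand]
        refine mem_filter.mpr ⟨mem_powerset.mpr (insert_subset heJ hMJ),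
          hM₀M.trans (subset_insert _ _), ?_⟩
        rw [coe_insert]
        refine hMpd.insert ?_
        intro f hf _
        rw [disjoint_left]
        intro x hxe hxf
        exact hRsup x (heR hxe) (mem_biUnion.mpr ⟨f, mem_coe.mp hf, hxf⟩)
      have hcontr := hmax _ hCand'
      rw [card_insert_of_notMem heM] at hcontr
      omega
    · push_neg at hedge
      have hk1 : 1 ≤ n - M.card := by omega
      have hR32sub : ((R ∩ A).powersetCard 3 ×ˢ (R ∩ B).powersetCard 2).image
          (fun p => p.1 ∪ p.2) ⊆ N := by
        intro g hg
        obtain ⟨p, hp, rfl⟩ := mem_image.mp hg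
        simp only [mem_product, mem_powersetCard] at hp
        obtain ⟨⟨hp1, hp1c⟩, hp2, hp2c⟩ := hp
        have hs1 : p.1 ⊆ A := hp1.trans inter_subset_right
        have hs2 : p.2 ⊆ B := hp2.trans inter_subset_right
        refine hNmem _ ?_ ?_ ?_
        · rw [union_inter_eq hs1 hs2 hAB, hp1c]
        · rw [union_comm, union_inter_eq hs2 hs1 hAB.symm, hp2c]
        · intro hgJ
          exact hedge _ hgJ
            (union_subset (hp1.trans inter_subset_left) (hp2.trans inter_subset_left))
      have hR32card : (((R ∩ A).powersetCard 3 ×ˢ (R ∩ B).powersetCard 2).image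
          (fun p => p.1 ∪ p.2)).card
          = (3*(n - M.card)).choose 3 * (2*(n - M.card)).choose 2 := by
        rw [card_unionImage _ _ (hAB.mono inter_subset_right inter_subset_right), hRA, hRB]
      have hk5 : (n - M.card)^5 ≤ N.card := by
        calc (n - M.card)^5 ≤ (3*(n - M.card)).choose 3 * (2*(n - M.card)).choose 2 :=
              k5_le_choose _ hk1
          _ = _ := hR32card.symm
          _ ≤ N.card := card_le_card hR32sub
      have hkR : ((n - M.card : ℕ) : ℝ) ≤ (n:ℝ)/10^4 := by
        by_contra hcon
        push_neg at hcon
        have h1 : ((n:ℝ)/10^4)^5 < ((n - M.card : ℕ):ℝ)^5 :=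
          pow_lt_pow_left₀ hcon (by positivity) (by norm_num)
        have h2 : ((n - M.card : ℕ):ℝ)^5 ≤ 108/10^24 * (n:ℝ)^5 := by
          calc ((n - M.card : ℕ):ℝ)^5 = (((n - M.card)^5 : ℕ) : ℝ) := by push_cast; ring
            _ ≤ (N.card : ℝ) := by exact_mod_cast hk5
            _ ≤ _ := hNsmall
        nlinarith [pow_pos hnpos 5]
      have hMR : ((M.card : ℝ)) = (n:ℝ) - ((n - M.card : ℕ):ℝ) := by
        rw [Nat.cast_sub hMle]
        ring
      have hM₀R : ((M₀.card:ℝ)) ≤ (n:ℝ)/10^13 := by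
        calc ((M₀.card:ℝ)) ≤ (Bad.card : ℝ) := by exact_mod_cast hM₀card
          _ ≤ _ := hBadcard
      set q := n / 5 with hqdef
      have hq5 : 5 * q + 5 > n := by
        have := Nat.div_add_mod n 5
        have : n % 5 < 5 := Nat.mod_lt _ (by norm_num)
        omega
      have hq5' : 5 * q ≤ n := by
        have := Nat.div_add_mod n 5
        omega
      have hqRlow : (n:ℝ)/5 - 1 ≤ (q:ℝ) := by
        have h1 : (n:ℝ) < 5 * (q:ℝ) + 5 := by exact_mod_cast hq5
        linarith
      have hqRhigh : (q:ℝ) ≤ (n:ℝ)/5 := by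
        have h1 : 5 * (q:ℝ) ≤ (n:ℝ) := by exact_mod_cast hq5'
        linarith
      have hMM₀R : ((M \ M₀).card : ℝ) = (M.card:ℝ) - (M₀.card:ℝ) := by
        rw [card_sdiff_of_subset hM₀M, Nat.cast_sub (card_le_card hM₀M)]
      have hq4 : 4 * q ≤ (M \ M₀).card := by
        have hcast : ((4*q : ℕ):ℝ) ≤ (((M \ M₀).card : ℕ) : ℝ) := by
          push_cast
          rw [hMM₀R]
          nlinarith [hMR, hkR, hM₀R, hnR, hqRhigh]
        exact_mod_cast hcast
      obtain ⟨S1, hS1sub, hS1card⟩ := Finset.exists_subset_card_eq (s := (M \ M₀)) (n := q) (by omega)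
      obtain ⟨S2, hS2sub, hS2card⟩ := Finset.exists_subset_card_eq (s := ((M \ M₀) \ S1)) (n := q)
        (by rw [card_sdiff_of_subset hS1sub, hS1card]; omega)
      obtain ⟨S3, hS3sub, hS3card⟩ := Finset.exists_subset_card_eq (s := (((M \ M₀) \ S1) \ S2)) (n := q)
        (by rw [card_sdiff_of_subset hS2sub, card_sdiff_of_subset hS1sub, hS1card, hS2card]; omega)
      obtain ⟨S4, hS4sub, hS4card⟩ := Finset.exists_subset_card_eq (s := ((((M \ M₀) \ S1) \ S2) \ S3)) (n := q)
        (by rw [card_sdiff_of_subset hS3sub, card_sdiff_of_subset hS2sub, card_sdiff_of_subset hS1sub,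
              hS1card, hS2card, hS3card]; omega)
      have hS1MM : S1 ⊆ M \ M₀ := hS1sub
      have hS2MM : S2 ⊆ M \ M₀ := hS2sub.trans (sdiff_subset)
      have hS3MM : S3 ⊆ M \ M₀ := hS3sub.trans (sdiff_subset.trans sdiff_subset)
      have hS4MM : S4 ⊆ M \ M₀ :=
        hS4sub.trans ((sdiff_subset.trans sdiff_subset).trans sdiff_subset)
      have hS1M : S1 ⊆ M := hS1MM.trans sdiff_subset
      have hS2M : S2 ⊆ M := hS2MM.trans sdiff_subset
      have hS3M : S3 ⊆ M := hS3MM.trans sdiff_subset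
      have hS4M : S4 ⊆ M := hS4MM.trans sdiff_subset
      have hd12 : Disjoint S1 S2 :=
        disjoint_left.mpr (fun x h1 h2 => (mem_sdiff.mp (hS2sub h2)).2 h1)
      have hd13 : Disjoint S1 S3 :=
        disjoint_left.mpr (fun x h1 h3 => (mem_sdiff.mp (mem_sdiff.mp (hS3sub h3)).1).2 h1)
      have hd14 : Disjoint S1 S4 :=
        disjoint_left.mpr (fun x h1 h4 =>
          (mem_sdiff.mp (mem_sdiff.mp (mem_sdiff.mp (hS4sub h4)).1).1).2 h1)
      have hd23 : Disjoint S2 S3 :=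
        disjoint_left.mpr (fun x h2 h3 => (mem_sdiff.mp (hS3sub h3)).2 h2)
      have hd24 : Disjoint S2 S4 :=
        disjoint_left.mpr (fun x h2 h4 => (mem_sdiff.mp (mem_sdiff.mp (hS4sub h4)).1).2 h2)
      have hd34 : Disjoint S3 S4 :=
        disjoint_left.mpr (fun x h3 h4 => (mem_sdiff.mp (hS4sub h4)).2 h3)
      -- choose the roots
      have hRA3 : 3 ≤ (R ∩ A).card := by rw [hRA]; omega
      have hRB2 : 2 ≤ (R ∩ B).card := by rw [hRB]; omega
      obtain ⟨TA, hTAsub, hTAcard⟩ := Finset.exists_subset_card_eq (s := (R ∩ A)) (n := 3) hRA3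
      obtain ⟨TB, hTBsub, hTBcard⟩ := Finset.exists_subset_card_eq (s := (R ∩ B)) (n := 2) hRB2
      obtain ⟨u₁, u₂, u₃, hu12, hu13, hu23, rfl⟩ := card_eq_three.mp hTAcard
      obtain ⟨v₁, v₂, hv12, rfl⟩ := card_eq_two.mp hTBcard
      have hu₁RA : u₁ ∈ R ∩ A := hTAsub (by simp)
      have hu₂RA : u₂ ∈ R ∩ A := hTAsub (by simp)
      have hu₃RA : u₃ ∈ R ∩ A := hTAsub (by simp)
      have hv₁RB : v₁ ∈ R ∩ B := hTBsub (by simp)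
      have hv₂RB : v₂ ∈ R ∩ B := hTBsub (by simp)
      have hu₁A : u₁ ∈ A := (mem_inter.mp hu₁RA).2
      have hu₂A : u₂ ∈ A := (mem_inter.mp hu₂RA).2
      have hu₃A : u₃ ∈ A := (mem_inter.mp hu₃RA).2
      have hv₁B : v₁ ∈ B := (mem_inter.mp hv₁RB).2
      have hv₂B : v₂ ∈ B := (mem_inter.mp hv₂RB).2
      have hout : ∀ x ∈ ({u₁, u₂, u₃, v₁, v₂} : Finset (Fin (5*n))), x ∉ M.biUnion id := by
        intro x hx
        simp only [mem_insert, mem_singleton] at hx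
        rcases hx with rfl | rfl | rfl | rfl | rfl
        · exact hRsup _ (mem_inter.mp hu₁RA).1
        · exact hRsup _ (mem_inter.mp hu₂RA).1
        · exact hRsup _ (mem_inter.mp hu₃RA).1
        · exact hRsup _ (mem_inter.mp hv₁RB).1
        · exact hRsup _ (mem_inter.mp hv₂RB).1
      -- degrees of roots are small
      have hnotbad : ∀ x : Fin (5*n), x ∈ R →
          ((N.filter fun g => x ∈ g).card : ℝ) ≤ (n:ℝ)^4/10^8 := by
        intro x hx
        by_contra hcon
        push_neg at hcon
        have hxB : x ∈ Bad := by
          rw [hBadDef]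
          exact mem_filter.mpr ⟨mem_univ x, hcon⟩
        have hxcov := hM₀cov hxB
        obtain ⟨e, heM₀, hxe⟩ := mem_biUnion.mp hxcov
        exact hRsup x hx (mem_biUnion.mpr ⟨e, hM₀M heM₀, hxe⟩)
      have hcount : 625 * ((N.filter fun g => u₁ ∈ g).card + (N.filter fun g => u₂ ∈ g).card
          + (N.filter fun g => u₃ ∈ g).card + (N.filter fun g => v₁ ∈ g).card
          + (N.filter fun g => v₂ ∈ g).card) < q ^ 4 := by
        have b1 := hnotbad u₁ (mem_inter.mp hu₁RA).1
        have b2 := hnotbad u₂ (mem_inter.mp hu₂RA).1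
        have b3 := hnotbad u₃ (mem_inter.mp hu₃RA).1
        have b4 := hnotbad v₁ (mem_inter.mp hv₁RB).1
        have b5 := hnotbad v₂ (mem_inter.mp hv₂RB).1
        have hqbig : (10^6 : ℝ) ≤ (q:ℝ) + 1 := by
          have : (10^7 : ℝ)/5 - 1 + 1 ≤ (q:ℝ) + 1 := by
            have h58 : (10^7:ℝ)/5 - 1 ≤ (n:ℝ)/5 - 1 := by linarith
            linarith [hqRlow]
          linarith
        have hcastlt : (625 : ℝ) * (((N.filter fun g => u₁ ∈ g).card : ℝ)
            + ((N.filter fun g => u₂ ∈ g).card : ℝ)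
            + ((N.filter fun g => u₃ ∈ g).card : ℝ)
            + ((N.filter fun g => v₁ ∈ g).card : ℝ)
            + ((N.filter fun g => v₂ ∈ g).card : ℝ)) < (q:ℝ)^4 := by
          have hup : (625 : ℝ) * (((N.filter fun g => u₁ ∈ g).card : ℝ)
              + ((N.filter fun g => u₂ ∈ g).card : ℝ)
              + ((N.filter fun g => u₃ ∈ g).card : ℝ)
              + ((N.filter fun g => v₁ ∈ g).card : ℝ)
              + ((N.filter fun g => v₂ ∈ g).card : ℝ))
              ≤ 3125 * ((n:ℝ)^4/10^8) := by linarith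
          have hqn4 : (n:ℝ)/6 ≤ (q:ℝ) := by
            have h6 : (1:ℝ) ≤ (n:ℝ)/30 := by linarith
            linarith [hqRlow]
          have hq4big : ((n:ℝ)/6)^4 ≤ (q:ℝ)^4 :=
            pow_le_pow_left₀ (by positivity) hqn4 4
          have : 3125 * ((n:ℝ)^4/10^8) < ((n:ℝ)/6)^4 := by
            have hn4 : (0:ℝ) < (n:ℝ)^4 := pow_pos hnpos 4
            nlinarith [hn4]
          linarith
        have hnat : ((625 * ((N.filter fun g => u₁ ∈ g).card
            + (N.filter fun g => u₂ ∈ g).card + (N.filter fun g => u₃ ∈ g).card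
            + (N.filter fun g => v₁ ∈ g).card + (N.filter fun g => v₂ ∈ g).card) : ℕ) : ℝ)
            < ((q^4 : ℕ) : ℝ) := by push_cast; push_cast at hcastlt; linarith
        exact_mod_cast hnat
      obtain ⟨Q, hQJ, hQpd, hQsub, hQcard⟩ := augment A B hAB J M hMJ hJe hMpd
        S1 S2 S3 S4 hS1M hS2M hS3M hS4M hd12 hd13 hd14 hd23 hd24 hd34
        u₁ u₂ u₃ v₁ v₂ hu₁A hu₂A hu₃A hv₁B hv₂B hu12 hu13 hu23 hv12 hout
        N hNmem q hS1card hS2card hS3card hS4card hcount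
      have hM₀Q : M₀ ⊆ Q := by
        refine subset_trans ?_ hQsub
        intro x hx
        refine mem_sdiff.mpr ⟨hM₀M hx, ?_⟩
        intro hxS
        rcases mem_union.mp hxS with h | h
        · rcases mem_union.mp h with h | h
          · rcases mem_union.mp h with h | h
            · exact (mem_sdiff.mp (hS1MM h)).2 hx
            · exact (mem_sdiff.mp (hS2MM h)).2 hx
          · exact (mem_sdiff.mp (hS3MM h)).2 hx
        · exact (mem_sdiff.mp (hS4MM h)).2 hx
      have hQCand : Q ∈ Cand := by
        rw [hCand]
        exact mem_filter.mpr ⟨mem_powerset.mpr hQJ, hM₀Q, hQpd⟩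
      have := hmax _ hQCand
      omega
  refine ⟨M, hMJ, hMpd, ?_⟩
  refine eq_of_subset_of_card_le (subset_univ _) ?_
  rw [hsupcard, hMcard, card_univ, Fintype.card_fin]
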